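/- Let N ≥ 1, p > 1, and let u ∈ C⁴(ℝ^N) satisfy u > 0 and Δ(Δu) = u^p in ℝ^N. Set β = √(2/(p+1)), v = −Δu, and ζ = β·u^{(p+1)/2} − v. Then ζ is C² and satisfies the pointwise differential inequality Δζ ≥ β^{−1} · u^{(p−1)/2} · ζ everywhere in ℝ^N. -/

import Mathlib

open MeasureTheory Real

/-- The Laplacian of a function on `ℝ^N` (sum of pure second derivatives). -/
noncomputable def lap {N : ℕ} (u : EuclideanSpace ℝ (Fin N) → ℝ)
    (x : EuclideanSpace ℝ (Fin N)) : ℝ :=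
  ∑ i : Fin N, fderiv ℝ (fun y => fderiv ℝ u y (EuclideanSpace.single i 1)) x
    (EuclideanSpace.single i 1)

lemma dd_contDiff {N : ℕ} {m n : WithTop ℕ∞} {f : EuclideanSpace ℝ (Fin N) → ℝ}
    (hf : ContDiff ℝ n f) (h : m + 1 ≤ n) (v : EuclideanSpace ℝ (Fin N)) :
    ContDiff ℝ m (fun y => fderiv ℝ f y v) :=
  (hf.fderiv_right h).clm_apply contDiff_const

lemma lap_const_mul_add {N : ℕ} {f g : EuclideanSpace ℝ (Fin N) → ℝ} (c : ℝ)
    (hf : ContDiff ℝ 2 f) (hg : ContDiff ℝ 2 g) (x : EuclideanSpace ℝ (Fin N)) :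
    lap (fun y => c * f y + g y) x = c * lap f x + lap g x := by
  have hfd : Differentiable ℝ f := hf.differentiable (by norm_num)
  have hgd : Differentiable ℝ g := hg.differentiable (by norm_num)
  have hAf : ∀ v, Differentiable ℝ (fun y => fderiv ℝ f y v) := fun v =>
    (dd_contDiff hf (by norm_num) v).differentiable (one_ne_zero : (1 : WithTop ℕ∞) ≠ 0)
  have hAg : ∀ v, Differentiable ℝ (fun y => fderiv ℝ g y v) := fun v =>
    (dd_contDiff hg (by norm_num) v).differentiable (one_ne_zero : (1 : WithTop ℕ∞) ≠ 0)
  have hD : ∀ (y v : EuclideanSpace ℝ (Fin N)),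
      fderiv ℝ (fun z => c * f z + g z) y v = c * fderiv ℝ f y v + fderiv ℝ g y v := by
    intro y v
    rw [fderiv_fun_add ((hfd y).const_mul c) (hgd y), fderiv_const_mul (hfd y) c]
    simp
  unfold lap
  rw [Finset.mul_sum, ← Finset.sum_add_distrib]
  refine Finset.sum_congr rfl fun i _ => ?_
  have hrw : (fun y => fderiv ℝ (fun z => c * f z + g z) y (EuclideanSpace.single i 1))
      = fun y => c * fderiv ℝ f y (EuclideanSpace.single i 1)
          + fderiv ℝ g y (EuclideanSpace.single i 1) := funext fun y => hD y _
  rw [hrw, fderiv_fun_add ((hAf _ x).const_mul c) (hAg _ x), fderiv_const_mul (hAf _ x) c]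
  simp

lemma lap_contDiff {N : ℕ} {m n : WithTop ℕ∞} {f : EuclideanSpace ℝ (Fin N) → ℝ}
    (hf : ContDiff ℝ n f) (h : m + 2 ≤ n) : ContDiff ℝ m (lap f) := by
  unfold lap
  have h1 : m + 1 + 1 ≤ n := by rwa [add_assoc, one_add_one_eq_two]
  exact ContDiff.sum fun i _ => dd_contDiff (dd_contDiff hf h1 _) le_rfl _

/-- For a `C⁴` positive solution of `Δ²u = u^p`, the function
`ζ = √(2/(p+1)) u^{(p+1)/2} − v`, `v = -Δu`, is `C²` and satisfies
`Δζ ≥ √((p+1)/2) u^{(p−1)/2} ζ` pointwise. -/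
theorem zeta_differential_inequality
    (N : ℕ) (hN : 1 ≤ N) (p : ℝ) (hp : 1 < p)
    (u : EuclideanSpace ℝ (Fin N) → ℝ)
    (hu : ContDiff ℝ 4 u) (hpos : ∀ x, 0 < u x)
    (heq : ∀ x, lap (lap u) x = u x ^ p) :
    ContDiff ℝ 2 (fun x => Real.sqrt (2 / (p + 1)) * u x ^ ((p + 1) / 2) - (-(lap u x)))
      ∧ ∀ x, (Real.sqrt (2 / (p + 1)))⁻¹ * u x ^ ((p - 1) / 2) *
          (Real.sqrt (2 / (p + 1)) * u x ^ ((p + 1) / 2) - (-(lap u x)))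
        ≤ lap (fun y => Real.sqrt (2 / (p + 1)) * u y ^ ((p + 1) / 2) - (-(lap u y))) x := by
  set β := Real.sqrt (2 / (p + 1)) with hβdef
  set q : ℝ := (p + 1) / 2 with hqdef
  have hp1 : (0:ℝ) < p + 1 := by linarith
  have hβpos : 0 < β := Real.sqrt_pos.2 (by positivity)
  have hβne : β ≠ 0 := ne_of_gt hβpos
  have hq1 : 1 < q := by rw [hqdef]; linarith
  have hβsq : β * β = 2 / (p + 1) := Real.mul_self_sqrt (by positivity)
  have hβq : β * q = β⁻¹ := by
    apply mul_left_cancel₀ hβne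
    rw [← mul_assoc, hβsq, mul_inv_cancel₀ hβne, hqdef]
    field_simp
  have hq2 : (p - 1) / 2 = q - 1 := by rw [hqdef]; ring
  have hud : Differentiable ℝ u := hu.differentiable (by norm_num)
  have huq : ContDiff ℝ 2 (fun y => u y ^ q) :=
    contDiff_iff_contDiffAt.2 fun y =>
      ((hu.of_le (by norm_num)).contDiffAt).rpow_const_of_ne (ne_of_gt (hpos y))
  have hlap2 : ContDiff ℝ 2 (lap u) := lap_contDiff hu (by norm_num)
  have hζ : ContDiff ℝ 2 (fun y => β * u y ^ q - (-(lap u y))) :=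
    (contDiff_const.mul huq).sub hlap2.neg
  refine ⟨hζ, fun x => ?_⟩
  have hwd : ∀ v, Differentiable ℝ (fun y => fderiv ℝ u y v) := fun v =>
    (dd_contDiff hu (by norm_num) v).differentiable (one_ne_zero : (1 : WithTop ℕ∞) ≠ 0)
  have hg1d : Differentiable ℝ (fun y => u y ^ q) := huq.differentiable (by norm_num)
  have hA1d : ∀ v, Differentiable ℝ (fun y => fderiv ℝ (fun z => u z ^ q) y v) := fun v =>
    (dd_contDiff huq (by norm_num) v).differentiable (one_ne_zero : (1 : WithTop ℕ∞) ≠ 0)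
  have hA2d : ∀ v, Differentiable ℝ (fun y => fderiv ℝ (lap u) y v) := fun v =>
    (dd_contDiff hlap2 (by norm_num) v).differentiable (one_ne_zero : (1 : WithTop ℕ∞) ≠ 0)
  have stepA : ∀ (y : EuclideanSpace ℝ (Fin N)) (v : EuclideanSpace ℝ (Fin N)),
      fderiv ℝ (fun z => u z ^ q) y v = q * u y ^ (q - 1) * fderiv ℝ u y v := by
    intro y v
    rw [((hud y).hasFDerivAt.rpow_const (Or.inl (ne_of_gt (hpos y)))).fderiv]
    simp [mul_assoc]
  have stepC : ∀ i : Fin N,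
      fderiv ℝ (fun y => fderiv ℝ (fun z => u z ^ q) y (EuclideanSpace.single i 1)) x
        (EuclideanSpace.single i 1)
      = q * u x ^ (q - 1) *
          (fderiv ℝ (fun y => fderiv ℝ u y (EuclideanSpace.single i 1)) x
            (EuclideanSpace.single i 1))
        + q * (q - 1) * u x ^ (q - 2) *
            (fderiv ℝ u x (EuclideanSpace.single i 1)) ^ 2 := by
    intro i
    have hrw : (fun y => fderiv ℝ (fun z => u z ^ q) y (EuclideanSpace.single i 1))
        = fun y => q * u y ^ (q - 1) * fderiv ℝ u y (EuclideanSpace.single i 1) :=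
      funext fun y => stepA y _
    rw [hrw]
    have ha : HasFDerivAt (fun y => q * u y ^ (q - 1))
        (q • (((q - 1) * u x ^ (q - 1 - 1)) • fderiv ℝ u x)) x :=
      ((hud x).hasFDerivAt.rpow_const (Or.inl (ne_of_gt (hpos x)))).const_mul q
    have hb : HasFDerivAt (fun y => fderiv ℝ u y (EuclideanSpace.single i 1))
        (fderiv ℝ (fun y => fderiv ℝ u y (EuclideanSpace.single i 1)) x) x :=
      (hwd _ x).hasFDerivAt
    rw [HasFDerivAt.fderiv (f := fun y => q * u y ^ (q - 1) * fderiv ℝ u y (EuclideanSpace.single i 1)) (ha.mul hb)]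
    have hqq : q - 1 - 1 = q - 2 := by ring
    simp [hqq]
    ring
  have hζfun : (fun y => β * u y ^ q - (-(lap u y))) = fun y => β * u y ^ q + lap u y := by
    funext y; ring
  have hlapζ : lap (fun z => β * u z ^ q + lap u z) x
      = β * lap (fun z => u z ^ q) x + lap (lap u) x :=
    lap_const_mul_add β huq hlap2 x
  have hlapq : lap (fun z => u z ^ q) x
      = q * u x ^ (q - 1) * lap u x
        + q * (q - 1) * u x ^ (q - 2) *
            ∑ i : Fin N, (fderiv ℝ u x (EuclideanSpace.single i 1)) ^ 2 := by
    unfold lap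
    rw [Finset.mul_sum, Finset.mul_sum, ← Finset.sum_add_distrib]
    exact Finset.sum_congr rfl fun i _ => by rw [stepC i]
  have hRHS : lap (fun y => β * u y ^ q - (-(lap u y))) x
      = β⁻¹ * u x ^ (q - 1) * lap u x + u x ^ p
        + β * (q * (q - 1)) * u x ^ (q - 2) *
            ∑ i : Fin N, (fderiv ℝ u x (EuclideanSpace.single i 1)) ^ 2 := by
    rw [hζfun, hlapζ, hlapq, heq x]
    linear_combination (u x ^ (q - 1) * lap u x) * hβq
  rw [hRHS, hq2]
  have hmul : u x ^ (q - 1) * u x ^ q = u x ^ p := by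
    rw [← Real.rpow_add (hpos x)]; congr 1; rw [hqdef]; ring
  have hββ : β⁻¹ * β = 1 := inv_mul_cancel₀ hβne
  have hLHS : β⁻¹ * u x ^ (q - 1) * (β * u x ^ q - (-(lap u x)))
      = u x ^ p + β⁻¹ * u x ^ (q - 1) * lap u x := by
    calc β⁻¹ * u x ^ (q - 1) * (β * u x ^ q - (-(lap u x)))
        = (β⁻¹ * β) * (u x ^ (q - 1) * u x ^ q) + β⁻¹ * u x ^ (q - 1) * lap u x := by ring
      _ = u x ^ p + β⁻¹ * u x ^ (q - 1) * lap u x := by rw [hββ, hmul, one_mul]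
  rw [hLHS]
  have hnn : 0 ≤ β * (q * (q - 1)) * u x ^ (q - 2) *
      ∑ i : Fin N, (fderiv ℝ u x (EuclideanSpace.single i 1)) ^ 2 := by
    apply mul_nonneg
    · apply mul_nonneg
      · apply mul_nonneg hβpos.le
        nlinarith
      · exact (Real.rpow_pos_of_pos (hpos x) _).le
    · exact Finset.sum_nonneg fun i _ => sq_nonneg _
  linarith
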